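/- arXiv:2504.16229 — 2 statements merged into one kernel-verified Lean document; each statement's English description precedes it below -/
import Mathlib

section
/- Let d, k ≥ 1 be integers, z ≥ 1 a real, and γ ≥ 1. Let X ⊆ ℝ^d be finite with more than k distinct points and let x ∈ X. Let C ⊆ X be nonempty with |C| ≤ k and Cost(X,C) ≤ γ · min{Cost(X,T) : ∅ ≠ T ⊆ X, |T| ≤ k}. Let OPT_x = min{Cost(X,T) : T ⊆ X, x ∈ T, |T| ≤ k}. Let C' = W ∪ {x}, where W ⊆ C with |W| ≤ k−1 is chosen so that Cost(X, W ∪ {x}) is minimal over all subsets W ⊆ C with |W| ≤ k−1. Then OPT_x ≤ Cost(X, C') ≤ (2^z + 2^{2z} + 2^{2z}·γ) · OPT_x. -/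
open scoped BigOperators Classical

/-- `dSet x C` is the distance from the point `x` to the finite set `C`. -/
noncomputable def dSet {d : ℕ} (x : EuclideanSpace ℝ (Fin d))
    (C : Finset (EuclideanSpace ℝ (Fin d))) : ℝ :=
  sInf ((fun c => dist x c) '' (C : Set (EuclideanSpace ℝ (Fin d))))

/-- `kzCost z X C = Σ_{x ∈ X} dist(x,C)^z`. -/
noncomputable def kzCost {d : ℕ} (z : ℝ) (X C : Finset (EuclideanSpace ℝ (Fin d))) : ℝ :=
  ∑ x ∈ X, dSet x C ^ z

lemma dSet_nonneg {d : ℕ} (x : EuclideanSpace ℝ (Fin d))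
    (C : Finset (EuclideanSpace ℝ (Fin d))) : 0 ≤ dSet x C := by
  apply Real.sInf_nonneg
  rintro r ⟨c, -, rfl⟩
  exact dist_nonneg

lemma dSet_le_dist {d : ℕ} (x : EuclideanSpace ℝ (Fin d))
    {C : Finset (EuclideanSpace ℝ (Fin d))} {c : EuclideanSpace ℝ (Fin d)}
    (hc : c ∈ C) : dSet x C ≤ dist x c := by
  apply csInf_le
  · exact ⟨0, by rintro r ⟨c', -, rfl⟩; exact dist_nonneg⟩
  · exact ⟨c, by simpa using hc, rfl⟩

lemma exists_dSet_eq {d : ℕ} (x : EuclideanSpace ℝ (Fin d))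
    {C : Finset (EuclideanSpace ℝ (Fin d))} (hC : C.Nonempty) :
    ∃ c ∈ C, dSet x C = dist x c := by
  obtain ⟨c0, hc0⟩ := hC
  have hfin : ((fun c => dist x c) '' (C : Set (EuclideanSpace ℝ (Fin d)))).Finite :=
    (C.finite_toSet).image _
  have hne : ((fun c => dist x c) '' (C : Set (EuclideanSpace ℝ (Fin d)))).Nonempty :=
    ⟨dist x c0, ⟨c0, by simpa using hc0, rfl⟩⟩
  obtain ⟨c, hcC, hc⟩ := hne.csInf_mem hfin
  exact ⟨c, by simpa using hcC, hc.symm⟩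

lemma kzCost_nonneg {d : ℕ} (z : ℝ) (X C : Finset (EuclideanSpace ℝ (Fin d))) :
    0 ≤ kzCost z X C :=
  Finset.sum_nonneg fun p _ => Real.rpow_nonneg (dSet_nonneg p C) z

lemma add_rpow_le {z a b : ℝ} (hz : 0 ≤ z) (ha : 0 ≤ a) (hb : 0 ≤ b) :
    (a + b) ^ z ≤ 2 ^ z * a ^ z + 2 ^ z * b ^ z := by
  have h2 : (0:ℝ) ≤ 2 := by norm_num
  rcases le_total a b with h | h
  · have h1 : (a + b) ^ z ≤ (2 * b) ^ z :=
      Real.rpow_le_rpow (by linarith) (by linarith) hz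
    rw [Real.mul_rpow h2 hb] at h1
    have : 0 ≤ 2 ^ z * a ^ z :=
      mul_nonneg (Real.rpow_nonneg h2 z) (Real.rpow_nonneg ha z)
    linarith
  · have h1 : (a + b) ^ z ≤ (2 * a) ^ z :=
      Real.rpow_le_rpow (by linarith) (by linarith) hz
    rw [Real.mul_rpow h2 ha] at h1
    have : 0 ≤ 2 ^ z * b ^ z :=
      mul_nonneg (Real.rpow_nonneg h2 z) (Real.rpow_nonneg hb z)
    linarith

/-- Swapping the best center of a `γ`-approximate medoids solution `C` for the fixed point
`x` yields a `(2^z + 2^{2z} + 2^{2z}γ)`-approximation to the optimal `(k,z)`-medoids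
clustering of `X` constrained to contain a center at `x`. -/
theorem constrained_medoid_swap
    (d k : ℕ) (hd : 1 ≤ d) (hk : 1 ≤ k) (z γ : ℝ) (hz : 1 ≤ z) (hγ : 1 ≤ γ)
    (X : Finset (EuclideanSpace ℝ (Fin d))) (hX : k < X.card)
    (x : EuclideanSpace ℝ (Fin d)) (hx : x ∈ X)
    (C : Finset (EuclideanSpace ℝ (Fin d))) (hCX : C ⊆ X) (hCne : C.Nonempty)
    (hCk : C.card ≤ k)
    (happrox : ∀ T : Finset (EuclideanSpace ℝ (Fin d)),
      T ⊆ X → T.Nonempty → T.card ≤ k → kzCost z X C ≤ γ * kzCost z X T)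
    (W : Finset (EuclideanSpace ℝ (Fin d))) (hWC : W ⊆ C) (hWk : W.card ≤ k - 1)
    (hWmin : ∀ W' : Finset (EuclideanSpace ℝ (Fin d)), W' ⊆ C → W'.card ≤ k - 1 →
      kzCost z X (insert x W) ≤ kzCost z X (insert x W')) :
    sInf {r : ℝ | ∃ T : Finset (EuclideanSpace ℝ (Fin d)),
        T ⊆ X ∧ x ∈ T ∧ T.card ≤ k ∧ r = kzCost z X T} ≤ kzCost z X (insert x W) ∧
      kzCost z X (insert x W) ≤ (2 ^ z + 2 ^ (2 * z) + 2 ^ (2 * z) * γ) *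
        sInf {r : ℝ | ∃ T : Finset (EuclideanSpace ℝ (Fin d)),
          T ⊆ X ∧ x ∈ T ∧ T.card ≤ k ∧ r = kzCost z X T} := by
  set S : Set ℝ := {r : ℝ | ∃ T : Finset (EuclideanSpace ℝ (Fin d)),
      T ⊆ X ∧ x ∈ T ∧ T.card ≤ k ∧ r = kzCost z X T} with hS
  have hz0 : (0:ℝ) ≤ z := by linarith
  -- S is finite
  have hSfin : S.Finite := by
    have hfin : ({T : Finset (EuclideanSpace ℝ (Fin d)) | T ⊆ X}).Finite :=
      Set.Finite.ofFinset X.powerset (by simp [Finset.mem_powerset])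
    apply Set.Finite.subset (hfin.image (fun T => kzCost z X T))
    rintro r ⟨T, hTX, -, -, rfl⟩
    exact ⟨T, hTX, rfl⟩
  have hSne : S.Nonempty := by
    refine ⟨kzCost z X {x}, {x}, ?_, Finset.mem_singleton_self x, ?_, rfl⟩
    · simpa using hx
    · simpa using hk
  have hbdd : BddBelow S := hSfin.bddBelow
  -- the swap candidate is feasible
  have hfeas : kzCost z X (insert x W) ∈ S := by
    refine ⟨insert x W, ?_, Finset.mem_insert_self x W, ?_, rfl⟩
    · exact Finset.insert_subset hx (hWC.trans hCX)
    · have := Finset.card_insert_le x W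
      omega
  refine ⟨csInf_le hbdd hfeas, ?_⟩
  -- obtain an optimal constrained solution
  obtain ⟨Tstar, hTX, hxT, hTk, hSval⟩ := hSne.csInf_mem hSfin
  rw [hSval]
  set O : ℝ := kzCost z X Tstar with hO
  have hOnn : 0 ≤ O := kzCost_nonneg z X Tstar
  have hTne : Tstar.Nonempty := ⟨x, hxT⟩
  -- nearest-center choice functions
  have hnCex : ∀ q : EuclideanSpace ℝ (Fin d), ∃ c, c ∈ C ∧ dSet q C = dist q c := by
    intro q
    obtain ⟨c, hc, h⟩ := exists_dSet_eq q hCne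
    exact ⟨c, hc, h⟩
  choose nC hnC1 hnC2 using hnCex
  have hnTex : ∀ q : EuclideanSpace ℝ (Fin d), ∃ t, t ∈ Tstar ∧ dSet q Tstar = dist q t := by
    intro q
    obtain ⟨t, ht, h⟩ := exists_dSet_eq q hTne
    exact ⟨t, ht, h⟩
  choose nT hnT1 hnT2 using hnTex
  -- key: there is a good subset W' of C
  have key : ∃ W' : Finset (EuclideanSpace ℝ (Fin d)), W' ⊆ C ∧ W'.card ≤ k - 1 ∧
      ∀ p ∈ X, dSet p (insert x W') ^ z ≤
        2 ^ (2 * z) * dSet p Tstar ^ z + 2 ^ z * dSet p C ^ z := by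
    have h2z1 : (1:ℝ) ≤ 2 ^ z := by
      rw [show (1:ℝ) = 2 ^ (0:ℝ) by simp]
      exact Real.rpow_le_rpow_left_iff (by norm_num) |>.mpr hz0
    have h22z1 : (1:ℝ) ≤ 2 ^ (2*z) := by
      rw [show (1:ℝ) = 2 ^ (0:ℝ) by simp]
      exact Real.rpow_le_rpow_left_iff (by norm_num) |>.mpr (by linarith)
    by_cases hCcard : C.card ≤ k - 1
    · refine ⟨C, subset_rfl, hCcard, ?_⟩
      intro p hp
      have h1 : dSet p (insert x C) ≤ dSet p C := by
        calc dSet p (insert x C) ≤ dist p (nC p) :=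
              dSet_le_dist p (Finset.mem_insert_of_mem (hnC1 p))
          _ = dSet p C := (hnC2 p).symm
      have h2 : dSet p (insert x C) ^ z ≤ dSet p C ^ z :=
        Real.rpow_le_rpow (dSet_nonneg p _) h1 hz0
      have h3 : dSet p C ^ z ≤ 2 ^ z * dSet p C ^ z :=
        le_mul_of_one_le_left (Real.rpow_nonneg (dSet_nonneg p C) z) h2z1
      have h4 : 0 ≤ 2 ^ (2*z) * dSet p Tstar ^ z :=
        mul_nonneg (Real.rpow_nonneg (by norm_num) _)
          (Real.rpow_nonneg (dSet_nonneg p Tstar) z)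
      linarith
    · have hCk' : C.card = k := by omega
      set F : Finset (EuclideanSpace ℝ (Fin d)) := (Tstar.erase x).image nC with hF
      have hFcard : F.card < C.card := by
        have h1 : F.card ≤ (Tstar.erase x).card := Finset.card_image_le
        have h2 : (Tstar.erase x).card = Tstar.card - 1 := Finset.card_erase_of_mem hxT
        have h3 : 1 ≤ Tstar.card := Finset.card_pos.mpr hTne
        omega
      have hex : ∃ cstar ∈ C, cstar ∉ F := by
        by_contra h
        push_neg at h
        have hsub : C ⊆ F := fun c hc => h c hc
        have := Finset.card_le_card hsub
        omega
      obtain ⟨cstar, hcC, hcF⟩ := hex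
      refine ⟨C.erase cstar, Finset.erase_subset _ _, ?_, ?_⟩
      · rw [Finset.card_erase_of_mem hcC]; omega
      · intro p hp
        have haT : 0 ≤ dSet p Tstar := dSet_nonneg p Tstar
        have haC : 0 ≤ dSet p C := dSet_nonneg p C
        by_cases hpx : nT p = x
        · have h1 : dSet p (insert x (C.erase cstar)) ≤ dSet p Tstar := by
            calc dSet p (insert x (C.erase cstar)) ≤ dist p x :=
                  dSet_le_dist p (Finset.mem_insert_self x _)
              _ = dist p (nT p) := by rw [hpx]
              _ = dSet p Tstar := (hnT2 p).symm
          have h2 : dSet p (insert x (C.erase cstar)) ^ z ≤ dSet p Tstar ^ z :=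
            Real.rpow_le_rpow (dSet_nonneg p _) h1 hz0
          have h3 : dSet p Tstar ^ z ≤ 2 ^ (2*z) * dSet p Tstar ^ z :=
            le_mul_of_one_le_left (Real.rpow_nonneg haT z) h22z1
          have h4 : 0 ≤ 2 ^ z * dSet p C ^ z :=
            mul_nonneg (Real.rpow_nonneg (by norm_num) _) (Real.rpow_nonneg haC z)
          linarith
        · have htT : nT p ∈ Tstar.erase x := Finset.mem_erase.mpr ⟨hpx, hnT1 p⟩
          have hcne : nC (nT p) ≠ cstar := by
            intro h
            exact hcF (h ▸ Finset.mem_image_of_mem nC htT)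
          have hmem' : nC (nT p) ∈ insert x (C.erase cstar) :=
            Finset.mem_insert_of_mem (Finset.mem_erase.mpr ⟨hcne, hnC1 _⟩)
          have h1 : dSet p (insert x (C.erase cstar)) ≤ 2 * dSet p Tstar + dSet p C := by
            calc dSet p (insert x (C.erase cstar)) ≤ dist p (nC (nT p)) :=
                  dSet_le_dist p hmem'
              _ ≤ dist p (nT p) + dist (nT p) (nC (nT p)) := dist_triangle _ _ _
              _ = dSet p Tstar + dSet (nT p) C := by rw [← hnT2, ← hnC2]
              _ ≤ dSet p Tstar + dist (nT p) (nC p) := by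
                  have := dSet_le_dist (nT p) (hnC1 p)
                  linarith
              _ ≤ dSet p Tstar + (dist (nT p) p + dist p (nC p)) := by
                  have := dist_triangle (nT p) p (nC p)
                  linarith
              _ = 2 * dSet p Tstar + dSet p C := by
                  rw [dist_comm (nT p) p, ← hnT2, ← hnC2]; ring
          have h2 : dSet p (insert x (C.erase cstar)) ^ z ≤
              (2 * dSet p Tstar + dSet p C) ^ z :=
            Real.rpow_le_rpow (dSet_nonneg p _) h1 (by linarith)
          have h3 : (2 * dSet p Tstar + dSet p C) ^ z ≤
              2 ^ z * (2 * dSet p Tstar) ^ z + 2 ^ z * dSet p C ^ z :=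
            add_rpow_le hz0 (by linarith) haC
          have h4 : (2 * dSet p Tstar) ^ z = 2 ^ z * dSet p Tstar ^ z :=
            Real.mul_rpow (by norm_num) haT
          have h5 : (2:ℝ) ^ (2*z) = 2 ^ z * 2 ^ z := by
            rw [two_mul, Real.rpow_add (by norm_num : (0:ℝ) < 2)]
          rw [h4] at h3
          rw [h5]
          calc dSet p (insert x (C.erase cstar)) ^ z ≤
              2 ^ z * (2 ^ z * dSet p Tstar ^ z) + 2 ^ z * dSet p C ^ z := le_trans h2 h3
            _ = 2 ^ z * 2 ^ z * dSet p Tstar ^ z + 2 ^ z * dSet p C ^ z := by ring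
  obtain ⟨W', hW'C, hW'k, hpt⟩ := key
  have hsum : kzCost z X (insert x W') ≤ 2 ^ (2*z) * O + 2 ^ z * kzCost z X C := by
    calc kzCost z X (insert x W') = ∑ p ∈ X, dSet p (insert x W') ^ z := rfl
      _ ≤ ∑ p ∈ X, (2 ^ (2*z) * dSet p Tstar ^ z + 2 ^ z * dSet p C ^ z) :=
          Finset.sum_le_sum hpt
      _ = 2 ^ (2*z) * O + 2 ^ z * kzCost z X C := by
          rw [Finset.sum_add_distrib, ← Finset.mul_sum, ← Finset.mul_sum]
          rfl
  have hC_le : kzCost z X C ≤ γ * O := happrox Tstar hTX hTne hTk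
  have hCnn : 0 ≤ kzCost z X C := kzCost_nonneg z X C
  have h2z : (0:ℝ) ≤ 2 ^ z := Real.rpow_nonneg (by norm_num) z
  have h2zle : (2:ℝ) ^ z ≤ 2 ^ (2*z) :=
    Real.rpow_le_rpow_left_iff (by norm_num) |>.mpr (by linarith)
  have hmain : kzCost z X (insert x W) ≤ 2 ^ (2*z) * O + 2 ^ z * kzCost z X C :=
    le_trans (hWmin W' hW'C hW'k) hsum
  have hγ0 : (0:ℝ) ≤ γ := by linarith
  nlinarith [mul_le_mul_of_nonneg_left hC_le h2z,
    mul_le_mul_of_nonneg_right h2zle (mul_nonneg hγ0 hOnn)]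
end

section
/- For every ε ∈ (0, 1/2), every real p ≥ 1, every integer d ≥ 1, and every D ≥ 1, there exists ε'₀ > 0 depending only on ε, p, d, and D (and not on n) such that the following holds for every integer n ≥ 1 and all 0 < ε' ≤ ε'₀. Let B ∈ ℝ^{n×d} satisfy (1/D)·‖y‖_p ≤ ‖By‖_p ≤ D·‖y‖_p for all y ∈ ℝ^d, let B' ∈ ℝ^{n×d} satisfy |B'_{tj} − B_{tj}| ≤ ε'·|B_{tj}| for all entries, and let {1,…,n} = I₁ ⊔ … ⊔ I_m be any partition of the row indices. Then for every j ∈ {1,…,m} and all y ∈ ℝ^d: | Σ_{t∈I_j} |⟨b'_t, y⟩|^p − Σ_{t∈I_j} |⟨b_t, y⟩|^p | ≤ ε · ‖By‖_p^p, where b_t and b'_t denote the t-th rows of B and B' respectively. -/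
open scoped BigOperators

/-- The `L_p` norm of a vector `v ∈ ℝ^n`: `(Σ_i |v_i|^p)^{1/p}`. -/
noncomputable def lpNorm {n : ℕ} (p : ℝ) (v : Fin n → ℝ) : ℝ :=
  (∑ i, |v i| ^ p) ^ (1 / p)

lemma rpow_lip {p M a b : ℝ} (hp : 1 ≤ p) (ha : 0 ≤ a) (hb : 0 ≤ b)
    (haM : a ≤ M) (hbM : b ≤ M) : |a ^ p - b ^ p| ≤ p * M ^ (p - 1) * |a - b| := by
  have h := Convex.norm_image_sub_le_of_norm_hasDerivWithin_le
    (f := fun x : ℝ => x ^ p) (f' := fun x : ℝ => p * x ^ (p - 1)) (s := Set.Icc 0 M)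
    (fun x _ => (Real.hasDerivAt_rpow_const (Or.inr hp)).hasDerivWithinAt)
    (fun x hx => by
      rw [Real.norm_eq_abs, abs_mul, abs_of_nonneg (by linarith : (0:ℝ) ≤ p),
        abs_of_nonneg (Real.rpow_nonneg hx.1 _)]
      exact mul_le_mul_of_nonneg_left
        (Real.rpow_le_rpow hx.1 hx.2 (by linarith)) (by linarith))
    (convex_Icc 0 M) ⟨hb, hbM⟩ ⟨ha, haM⟩
  simpa [Real.norm_eq_abs] using h

lemma term_est {p u v w e : ℝ} (hp : 1 ≤ p) (hv : |v| ≤ w) (huv : |u - v| ≤ e * w)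
    (he1 : e ≤ 1) :
    abs (|u| ^ p - |v| ^ p) ≤ p * 2 ^ (p - 1) * e * w ^ p := by
  have hw : 0 ≤ w := le_trans (abs_nonneg v) hv
  rcases eq_or_lt_of_le hw with hw0 | hw0
  · have hv0 : v = 0 := abs_nonpos_iff.mp (by rw [hw0]; exact hv)
    have hu0 : u = 0 := by
      have : |u - v| ≤ 0 := by rw [← hw0] at huv; simpa using huv
      have := abs_nonpos_iff.mp this; linarith [this, hv0]
    simp [hu0, hv0, ← hw0, Real.zero_rpow (by positivity : p ≠ 0),
      Real.zero_rpow (show p ≠ 0 by positivity)]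
  · have hu : |u| ≤ 2 * w := by
      have : |u| ≤ |v| + |u - v| := by
        calc |u| = |v + (u - v)| := by ring_nf
        _ ≤ |v| + |u - v| := abs_add_le _ _
      nlinarith
    have h := rpow_lip (M := 2 * w) hp (abs_nonneg u) (abs_nonneg v) hu
      (hv.trans (by nlinarith : w ≤ 2 * w))
    have habs : abs (|u| - |v|) ≤ e * w := le_trans (abs_abs_sub_abs_le_abs_sub u v) huv
    have h2 : abs (|u| ^ p - |v| ^ p) ≤ p * (2 * w) ^ (p - 1) * (e * w) := by
      refine h.trans (mul_le_mul_of_nonneg_left habs ?_)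
      positivity
    refine h2.trans (le_of_eq ?_)
    rw [Real.mul_rpow (by norm_num : (0:ℝ) ≤ 2) hw,
      show p = (p - 1) + 1 by ring, Real.rpow_add_one hw0.ne' (p - 1)]
    ring

lemma lpNorm_rpow {n : ℕ} {p : ℝ} (hp : 1 ≤ p) (v : Fin n → ℝ) :
    lpNorm p v ^ p = ∑ i, |v i| ^ p := by
  have hp0 : p ≠ 0 := by positivity
  rw [lpNorm, one_div, Real.rpow_inv_rpow
    (Finset.sum_nonneg fun i _ => Real.rpow_nonneg (abs_nonneg _) _) hp0]

lemma lpNorm_nonneg {n : ℕ} {p : ℝ} (v : Fin n → ℝ) : 0 ≤ lpNorm p v :=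
  Real.rpow_nonneg (Finset.sum_nonneg fun i _ => Real.rpow_nonneg (abs_nonneg _) _) _

/-- If `B` is well-conditioned and `B'` agrees with `B` entrywise up to relative error
`ε'`, then for any partition of the row indices, the `L_p^p` contribution of each part is
preserved up to additive error `ε·‖By‖_p^p`, provided `ε'` is small enough depending only
on `ε`, `p`, `d`, `D` (and not on `n`). -/
theorem entrywise_rounding_partition_additive_error
    (ε : ℝ) (hε0 : 0 < ε) (hε : ε < 1 / 2) (p : ℝ) (hp : 1 ≤ p)
    (d : ℕ) (hd : 1 ≤ d) (D : ℝ) (hD : 1 ≤ D) :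
    ∃ ε'₀ : ℝ, 0 < ε'₀ ∧
      ∀ (n : ℕ), 1 ≤ n → ∀ ε' : ℝ, 0 < ε' → ε' ≤ ε'₀ →
        ∀ B B' : Matrix (Fin n) (Fin d) ℝ,
          (∀ y : Fin d → ℝ,
            (1 / D) * lpNorm p y ≤ lpNorm p (B.mulVec y) ∧
              lpNorm p (B.mulVec y) ≤ D * lpNorm p y) →
          (∀ t j, |B' t j - B t j| ≤ ε' * |B t j|) →
          ∀ (m : ℕ) (P : Fin m → Finset (Fin n)),
            (∀ i j, i ≠ j → Disjoint (P i) (P j)) →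
            (∀ t : Fin n, ∃ i, t ∈ P i) →
            ∀ (j : Fin m) (y : Fin d → ℝ),
              |(∑ t ∈ P j, |B'.mulVec y t| ^ p) - ∑ t ∈ P j, |B.mulVec y t| ^ p| ≤
                ε * lpNorm p (B.mulVec y) ^ p := by
  have hp0 : 0 < p := lt_of_lt_of_le one_pos hp
  have hDpos : 0 < D := lt_of_lt_of_le one_pos hD
  have hdpos : (0:ℝ) < d := by exact_mod_cast Nat.lt_of_lt_of_le Nat.zero_lt_one hd
  set C : ℝ := p * (2:ℝ) ^ (p - 1) * (d : ℝ) ^ p * D ^ (2 * p) with hC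
  have hCpos : 0 < C :=
    mul_pos (mul_pos (mul_pos hp0 (Real.rpow_pos_of_pos two_pos _))
      (Real.rpow_pos_of_pos hdpos _)) (Real.rpow_pos_of_pos hDpos _)
  refine ⟨min 1 (ε / C), lt_min one_pos (div_pos hε0 hCpos), ?_⟩
  intro n hn ε' hε'pos hε'le B B' hB hBB' m P hdisj hcover j y
  have hε'1 : ε' ≤ 1 := le_trans hε'le (min_le_left _ _)
  have hε'C : ε' ≤ ε / C := le_trans hε'le (min_le_right _ _)
  set w : Fin n → ℝ := fun t => ∑ k, |B t k| * |y k| with hwdef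
  have hwnn : ∀ t, 0 ≤ w t := fun t => Finset.sum_nonneg fun k _ => by positivity
  set N := lpNorm p (B.mulVec y) with hN
  have hNnn : 0 ≤ N := lpNorm_nonneg _
  have hNp : N ^ p = ∑ t, |B.mulVec y t| ^ p := lpNorm_rpow hp _
  -- pointwise bounds
  have hvw : ∀ t, |B.mulVec y t| ≤ w t := by
    intro t
    simp only [Matrix.mulVec, dotProduct, hwdef]
    exact (Finset.abs_sum_le_sum_abs _ _).trans (le_of_eq (by simp [abs_mul]))
  have huv : ∀ t, |B'.mulVec y t - B.mulVec y t| ≤ ε' * w t := by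
    intro t
    have heq : B'.mulVec y t - B.mulVec y t = ∑ k, (B' t k - B t k) * y k := by
      simp [Matrix.mulVec, dotProduct, sub_mul, Finset.sum_sub_distrib]
    rw [heq, hwdef, Finset.mul_sum]
    refine (Finset.abs_sum_le_sum_abs _ _).trans (Finset.sum_le_sum fun k _ => ?_)
    rw [abs_mul, ← mul_assoc]
    exact mul_le_mul_of_nonneg_right (hBB' t k) (abs_nonneg _)
  -- column bound
  have hcol : ∀ k : Fin d, (∑ t, |B t k| ^ p) ≤ D ^ p := by
    intro k
    have h2 := (hB (Pi.single k 1)).2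
    have he : lpNorm p (Pi.single k (1:ℝ)) = 1 := by
      rw [lpNorm]
      have h1 : (∑ i, |(Pi.single k (1:ℝ) : Fin d → ℝ) i| ^ p) = 1 := by
        rw [Finset.sum_eq_single k]
        · simp
        · intro b _ hb
          simp [Pi.single_eq_of_ne hb, Real.zero_rpow (ne_of_gt hp0)]
        · simp
      rw [h1, Real.one_rpow]
    have hcolv : B.mulVec (Pi.single k 1) = fun t => B t k := by
      funext t
      simp [Matrix.mulVec, dotProduct, Pi.single_apply, mul_ite]
    rw [he, mul_one] at h2
    calc (∑ t, |B t k| ^ p) = lpNorm p (B.mulVec (Pi.single k 1)) ^ p := by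
          rw [lpNorm_rpow hp, hcolv]
    _ ≤ D ^ p := Real.rpow_le_rpow (lpNorm_nonneg _) h2 hp0.le
  -- bound on y
  have hy : (∑ k, |y k| ^ p) ≤ D ^ p * N ^ p := by
    have h1 := (hB y).1
    rw [← hN] at h1
    have hyD : lpNorm p y ≤ D * N := by
      rw [div_mul_eq_mul_div, one_mul, div_le_iff₀ hDpos] at h1
      linarith [h1]
    calc (∑ k, |y k| ^ p) = lpNorm p y ^ p := (lpNorm_rpow hp y).symm
    _ ≤ (D * N) ^ p := Real.rpow_le_rpow (lpNorm_nonneg _) hyD hp0.le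
    _ = D ^ p * N ^ p := Real.mul_rpow hDpos.le hNnn
  -- per-row Hölder
  have hrow : ∀ t, w t ^ p ≤ (d:ℝ) ^ p * ∑ k, (|B t k| * |y k|) ^ p := by
    intro t
    have hd0 : (d:ℝ) ≠ 0 := ne_of_gt hdpos
    have hmean := Real.rpow_arith_mean_le_arith_mean_rpow Finset.univ
      (fun _ : Fin d => (d:ℝ)⁻¹) (fun k => (d:ℝ) * (|B t k| * |y k|))
      (fun _ _ => by positivity)
      (by simp [Finset.sum_const, Finset.card_univ]; field_simp)
      (fun k _ => by positivity) hp
    rw [show (∑ k, (d:ℝ)⁻¹ * ((d:ℝ) * (|B t k| * |y k|))) = w t from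
      Finset.sum_congr rfl (fun k _ => inv_mul_cancel_left₀ hd0 _)] at hmean
    refine hmean.trans ?_
    rw [Finset.mul_sum]
    refine Finset.sum_le_sum fun k _ => ?_
    rw [Real.mul_rpow hdpos.le (by positivity), ← mul_assoc]
    refine mul_le_mul_of_nonneg_right ?_ (Real.rpow_nonneg (by positivity) _)
    calc (d:ℝ)⁻¹ * (d:ℝ) ^ p ≤ 1 * (d:ℝ) ^ p :=
          mul_le_mul_of_nonneg_right (inv_le_one_of_one_le₀ (by exact_mod_cast hd)) (Real.rpow_nonneg hdpos.le _)
    _ = (d:ℝ) ^ p := one_mul _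
  -- total bound on ∑ w^p
  have hwsum : (∑ t, w t ^ p) ≤ (d:ℝ) ^ p * (D ^ p * (D ^ p * N ^ p)) := by
    calc (∑ t, w t ^ p) ≤ ∑ t, (d:ℝ) ^ p * ∑ k, (|B t k| * |y k|) ^ p :=
          Finset.sum_le_sum fun t _ => hrow t
    _ = (d:ℝ) ^ p * ∑ k, (∑ t, |B t k| ^ p) * |y k| ^ p := by
        rw [← Finset.mul_sum]
        congr 1
        rw [Finset.sum_comm]
        refine Finset.sum_congr rfl fun k _ => ?_
        rw [Finset.sum_mul]
        exact Finset.sum_congr rfl fun t _ => Real.mul_rpow (abs_nonneg _) (abs_nonneg _)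
    _ ≤ (d:ℝ) ^ p * ∑ k, D ^ p * |y k| ^ p := by
        refine mul_le_mul_of_nonneg_left
          (Finset.sum_le_sum fun k _ => mul_le_mul_of_nonneg_right (hcol k)
            (Real.rpow_nonneg (abs_nonneg _) _)) (Real.rpow_nonneg hdpos.le _)
    _ = (d:ℝ) ^ p * (D ^ p * ∑ k, |y k| ^ p) := by rw [← Finset.mul_sum]
    _ ≤ (d:ℝ) ^ p * (D ^ p * (D ^ p * N ^ p)) := by
        refine mul_le_mul_of_nonneg_left (mul_le_mul_of_nonneg_left hy
          (Real.rpow_nonneg hDpos.le _)) (Real.rpow_nonneg hdpos.le _)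
  -- conclude
  have hterm : ∀ t, abs (|B'.mulVec y t| ^ p - |B.mulVec y t| ^ p) ≤
      p * (2:ℝ) ^ (p - 1) * ε' * w t ^ p :=
    fun t => term_est hp (hvw t) (huv t) hε'1
  have hNppos : 0 ≤ N ^ p := Real.rpow_nonneg hNnn _
  calc |(∑ t ∈ P j, |B'.mulVec y t| ^ p) - ∑ t ∈ P j, |B.mulVec y t| ^ p|
      = |∑ t ∈ P j, (|B'.mulVec y t| ^ p - |B.mulVec y t| ^ p)| := by
        rw [Finset.sum_sub_distrib]
  _ ≤ ∑ t ∈ P j, abs (|B'.mulVec y t| ^ p - |B.mulVec y t| ^ p) :=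
        Finset.abs_sum_le_sum_abs _ _
  _ ≤ ∑ t ∈ P j, p * (2:ℝ) ^ (p - 1) * ε' * w t ^ p :=
        Finset.sum_le_sum fun t _ => hterm t
  _ ≤ ∑ t, p * (2:ℝ) ^ (p - 1) * ε' * w t ^ p :=
        Finset.sum_le_sum_of_subset_of_nonneg (Finset.subset_univ _)
          (fun t _ _ => by positivity)
  _ = p * (2:ℝ) ^ (p - 1) * ε' * ∑ t, w t ^ p := by rw [Finset.mul_sum]
  _ ≤ p * (2:ℝ) ^ (p - 1) * ε' * ((d:ℝ) ^ p * (D ^ p * (D ^ p * N ^ p))) :=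
        mul_le_mul_of_nonneg_left hwsum (by positivity)
  _ = C * ε' * N ^ p := by
        rw [hC, show D ^ (2*p) = D ^ p * D ^ p from by rw [two_mul, Real.rpow_add hDpos]]
        ring
  _ ≤ C * (ε / C) * N ^ p :=
        mul_le_mul_of_nonneg_right (mul_le_mul_of_nonneg_left hε'C hCpos.le) hNppos
  _ = ε * N ^ p := by field_simp
end
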